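/- arXiv:2512.04610 — 2 statements merged into one kernel-verified Lean document; each statement's English description precedes it below -/
import Mathlib

section
/- Let G be a graph, and let t₀, r, m be positive integers with r even, say r = 2r'. Let F = (P₁,P₂) be a flip such that G contains no complete bipartite subgraph K_{t₀,t₀} with one side contained in P₁ and the other side in P₂. Suppose B ⊆ V(G) is a set of at least t₀²+t₀+m−2 vertices such that all pairs of distinct vertices of B are at distance at most r in G, but B is r-independent in G ⊕ F (all pairwise distances exceed r). Then min(|P₁|,|P₂|) ≤ t₀²+t₀−2. -/
/-- The flip of a graph `G` on a pair of vertex sets `(A, B)`: the adjacency between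
every pair of distinct vertices `u ∈ A`, `v ∈ B` is complemented. -/
def gflip {V : Type*} (G : SimpleGraph V) (A B : Set V) : SimpleGraph V where
  Adj u v := u ≠ v ∧ Xor' (G.Adj u v) ((u ∈ A ∧ v ∈ B) ∨ (u ∈ B ∧ v ∈ A))
  symm := by
    constructor
    intro u v hx
    obtain ⟨h, hx⟩ := hx
    refine ⟨h.symm, ?_⟩
    have hGA : G.Adj v u ↔ G.Adj u v := ⟨fun h => h.symm, fun h => h.symm⟩
    unfold Xor' Xor at *
    tauto
  loopless := by constructor; intro v hx; exact hx.1 rfl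

/-- `B` is `r`-independent in `H`: any two distinct vertices of `B` are at distance
strictly greater than `r` (every walk between them is longer than `r`). -/
def RIndep {V : Type*} (H : SimpleGraph V) (r : ℕ) (B : Set V) : Prop :=
  ∀ u ∈ B, ∀ v ∈ B, u ≠ v → ∀ p : H.Walk u v, r < p.length

/-- Splitting a `G`-walk at the first "flipped" edge: either the whole walk survives in `H`,
or there is a surviving prefix to a vertex of `P₁ ∪ P₂`, followed by a flipped edge, followed
by a remaining `G`-walk. -/
lemma walk_split {V : Type*} {G H : SimpleGraph V} (P₁ P₂ : Finset V)
    (hH : ∀ x y : V, G.Adj x y →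
      ¬ ((x ∈ P₁ ∧ y ∈ P₂) ∨ (x ∈ P₂ ∧ y ∈ P₁)) → H.Adj x y) :
    ∀ {u v : V} (p : G.Walk u v),
      (∃ q : H.Walk u v, q.length = p.length) ∨
      (∃ x y : V, (x ∈ P₁ ∨ x ∈ P₂) ∧ (y ∈ P₁ ∨ y ∈ P₂) ∧
        ∃ (q : H.Walk u x) (w : G.Walk y v), q.length + 1 + w.length = p.length) := by
  intro u v p
  induction p with
  | nil => exact Or.inl ⟨SimpleGraph.Walk.nil, rfl⟩
  | @cons a b c h p ih =>
    by_cases hc : ((a ∈ P₁ ∧ b ∈ P₂) ∨ (a ∈ P₂ ∧ b ∈ P₁))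
    · refine Or.inr ⟨a, b, ?_, ?_, SimpleGraph.Walk.nil, p, by
        simp only [SimpleGraph.Walk.length_cons, SimpleGraph.Walk.length_nil]; omega⟩
      · rcases hc with ⟨h1, _⟩ | ⟨h1, _⟩
        · exact Or.inl h1
        · exact Or.inr h1
      · rcases hc with ⟨_, h2⟩ | ⟨_, h2⟩
        · exact Or.inr h2
        · exact Or.inl h2
    · have hadj : H.Adj a b := hH _ _ h hc
      rcases ih with ⟨q, hq⟩ | ⟨x, y, hx, hy, q, w, hlen⟩
      · exact Or.inl ⟨SimpleGraph.Walk.cons hadj q, by simp [hq]⟩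
      · refine Or.inr ⟨x, y, hx, hy, SimpleGraph.Walk.cons hadj q, w, ?_⟩
        simp only [SimpleGraph.Walk.length_cons]
        omega

/-- The core counting argument: if at least `2 t₀` vertices of the independent set are
`H`-close to `Q₁`, we find a `K_{t₀,t₀}` between `Q₁` and `Q₂` in `G`. -/
lemma core {V : Type*} {G H : SimpleGraph V} (t₀ r' : ℕ)
    (Q₁ Q₂ : Finset V) (B C : Finset V)
    (hCB : C ⊆ B)
    (hHadj : ∀ x y : V, x ∈ Q₁ → y ∈ Q₂ → x ≠ y → ¬ G.Adj x y → H.Adj x y)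
    (hind : ∀ u ∈ B, ∀ v ∈ B, u ≠ v → ∀ p : H.Walk u v, 2 * r' < p.length)
    (hK : ∀ X Y : Finset V, X ⊆ Q₁ → Y ⊆ Q₂ → Disjoint X Y →
      X.card = t₀ → Y.card = t₀ → (∀ x ∈ X, ∀ y ∈ Y, G.Adj x y) → False)
    (hQ₂ : 4 * t₀ ≤ Q₂.card)
    (hC : 2 * t₀ ≤ C.card)
    (hnear : ∀ b ∈ C, ∃ z ∈ Q₁, ∃ q : H.Walk b z, q.length + 1 ≤ r') : False := by
  classical
  set f : V → V := fun b =>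
    if h : ∃ z ∈ Q₁, ∃ q : H.Walk b z, q.length + 1 ≤ r' then h.choose else b with hf
  have hfQ : ∀ b ∈ C, f b ∈ Q₁ ∧ ∃ q : H.Walk b (f b), q.length + 1 ≤ r' := by
    intro b hb
    have h := hnear b hb
    have hfb : f b = h.choose := by simp only [hf]; exact dif_pos h
    rw [hfb]
    exact ⟨h.choose_spec.1, h.choose_spec.2⟩
  -- injectivity of f on C
  have hinj : ∀ b ∈ C, ∀ c ∈ C, f b = f c → b = c := by
    intro b hb c hc he
    by_contra hne
    obtain ⟨hbQ, qb, hqb⟩ := hfQ b hb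
    obtain ⟨hcQ, qc, hqc⟩ := hfQ c hc
    have hw := hind b (hCB hb) c (hCB hc) hne
      (qb.append ((qc.copy rfl he.symm).reverse))
    simp only [SimpleGraph.Walk.length_append, SimpleGraph.Walk.length_reverse,
      SimpleGraph.Walk.length_copy] at hw
    omega
  set S : Finset V := C.image f with hSdef
  have hSQ : S ⊆ Q₁ := by
    intro x hx
    obtain ⟨b, hb, rfl⟩ := Finset.mem_image.mp hx
    exact (hfQ b hb).1
  have hScard : 2 * t₀ ≤ S.card := by
    rw [hSdef, Finset.card_image_of_injOn (fun b hb c hc => hinj b hb c hc)]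
    exact hC
  obtain ⟨S', hS'sub, hS'card⟩ := Finset.exists_subset_card_eq (s := S) (n := 2 * t₀) hScard
  -- key property: every y ∈ Q₂ off S' is G-adjacent to all but at most one vertex of S'
  have hprop : ∀ x ∈ S', ∀ x' ∈ S', x ≠ x' → ∀ y ∈ Q₂, y ≠ x → y ≠ x' →
      G.Adj x y ∨ G.Adj x' y := by
    intro x hx x' hx' hne y hy hyx hyx'
    by_contra hcon
    push_neg at hcon
    obtain ⟨h1, h2⟩ := hcon
    obtain ⟨b, hb, rfl⟩ := Finset.mem_image.mp (hS'sub hx)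
    obtain ⟨c, hc, rfl⟩ := Finset.mem_image.mp (hS'sub hx')
    have hbc : b ≠ c := fun h => hne (by rw [h])
    obtain ⟨hbQ, qb, hqb⟩ := hfQ b hb
    obtain ⟨hcQ, qc, hqc⟩ := hfQ c hc
    have e1 : H.Adj (f b) y := hHadj _ _ hbQ hy (fun h => hyx h.symm) h1
    have e2 : H.Adj y (f c) := (hHadj _ _ hcQ hy (fun h => hyx' h.symm) h2).symm
    have hw := hind b (hCB hb) c (hCB hc) hbc
      (qb.append (SimpleGraph.Walk.cons e1 (SimpleGraph.Walk.cons e2 qc.reverse)))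
    simp only [SimpleGraph.Walk.length_append, SimpleGraph.Walk.length_cons,
      SimpleGraph.Walk.length_reverse] at hw
    omega
  -- split S' into two halves and count
  obtain ⟨X₁, hX₁sub, hX₁card⟩ := Finset.exists_subset_card_eq (s := S') (n := t₀) (by omega)
  set X₂ : Finset V := S' \ X₁ with hX₂def
  have hX₂sub : X₂ ⊆ S' := Finset.sdiff_subset
  have hX₂card : X₂.card = t₀ := by
    rw [hX₂def, Finset.card_sdiff_of_subset hX₁sub, hS'card, hX₁card]
    omega
  set T : Finset V := Q₂ \ S' with hTdef
  have hTcard : 2 * t₀ ≤ T.card := by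
    have := Finset.card_le_card_sdiff_add_card (s := Q₂) (t := S')
    have : Q₂.card ≤ T.card + S'.card := this
    omega
  set Y₁ : Finset V := T.filter (fun y => ∀ x ∈ X₁, G.Adj x y) with hY₁def
  set Y₂ : Finset V := T.filter (fun y => ∀ x ∈ X₂, G.Adj x y) with hY₂def
  have hcover : T ⊆ Y₁ ∪ Y₂ := by
    intro y hy
    by_contra hnot
    rw [Finset.mem_union] at hnot
    push_neg at hnot
    obtain ⟨hn1, hn2⟩ := hnot
    rw [hY₁def, Finset.mem_filter] at hn1
    rw [hY₂def, Finset.mem_filter] at hn2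
    push_neg at hn1 hn2
    obtain ⟨x₁, hx₁, ha₁⟩ := hn1 hy
    obtain ⟨x₂, hx₂, ha₂⟩ := hn2 hy
    have hx₁S : x₁ ∈ S' := hX₁sub hx₁
    have hx₂S : x₂ ∈ S' := hX₂sub hx₂
    have hx12 : x₁ ≠ x₂ := by
      intro h
      rw [h] at hx₁
      exact (Finset.mem_sdiff.mp hx₂).2 hx₁
    have hyQ : y ∈ Q₂ := (Finset.mem_sdiff.mp hy).1
    have hyS : y ∉ S' := (Finset.mem_sdiff.mp hy).2
    have := hprop x₁ hx₁S x₂ hx₂S hx12 y hyQ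
      (fun h => hyS (h ▸ hx₁S)) (fun h => hyS (h ▸ hx₂S))
    tauto
  have hYcard : t₀ ≤ Y₁.card ∨ t₀ ≤ Y₂.card := by
    have h1 : T.card ≤ (Y₁ ∪ Y₂).card := Finset.card_le_card hcover
    have h2 := Finset.card_union_le Y₁ Y₂
    omega
  have hdisj : ∀ X : Finset V, X ⊆ S' → ∀ Y : Finset V, Y ⊆ T → Disjoint X Y := by
    intro X hX Y hY
    rw [Finset.disjoint_left]
    intro a haX haY
    exact (Finset.mem_sdiff.mp (hY haY)).2 (hX haX)
  rcases hYcard with h | h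
  · obtain ⟨Y, hYsub, hYcard⟩ := Finset.exists_subset_card_eq (s := Y₁) (n := t₀) h
    have hYT : Y ⊆ T := hYsub.trans (Finset.filter_subset _ _)
    refine hK X₁ Y (hX₁sub.trans (hS'sub.trans hSQ)) (hYT.trans Finset.sdiff_subset)
      (hdisj X₁ hX₁sub Y hYT) hX₁card hYcard ?_
    intro x hx y hy
    exact (Finset.mem_filter.mp (hYsub hy)).2 x hx
  · obtain ⟨Y, hYsub, hYcard⟩ := Finset.exists_subset_card_eq (s := Y₂) (n := t₀) h
    have hYT : Y ⊆ T := hYsub.trans (Finset.filter_subset _ _)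
    refine hK X₂ Y (hX₂sub.trans (hS'sub.trans hSQ)) (hYT.trans Finset.sdiff_subset)
      (hdisj X₂ hX₂sub Y hYT) hX₂card hYcard ?_
    intro x hx y hy
    exact (Finset.mem_filter.mp (hYsub hy)).2 x hx

/-- If a single biclique-free flip `(P₁, P₂)` makes a set of at least `t₀² + t₀ + m - 2`
pairwise `r`-close vertices `r`-independent (`r = 2r'` even), then one of the two sides
of the flip has at most `t₀² + t₀ - 2` vertices. -/
theorem small_side_of_flip_even {V : Type*} (G : SimpleGraph V) (t₀ r' m : ℕ)
    (ht₀ : 0 < t₀) (hr' : 0 < r') (hm : 0 < m)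
    (hbig : 8 * t₀ ≤ t₀ ^ 2 + t₀ - 2)
    (P₁ P₂ B : Finset V)
    (hKtt : ¬ ∃ X Y : Finset V, X ⊆ P₁ ∧ Y ⊆ P₂ ∧ Disjoint X Y ∧
      X.card = t₀ ∧ Y.card = t₀ ∧ ∀ x ∈ X, ∀ y ∈ Y, G.Adj x y)
    (hB : t₀ ^ 2 + t₀ + m - 2 ≤ B.card)
    (hclose : ∀ u ∈ B, ∀ v ∈ B, u ≠ v → ∃ p : G.Walk u v, p.length ≤ 2 * r')
    (hind : RIndep (gflip G ↑P₁ ↑P₂) (2 * r') ↑B) :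
    min P₁.card P₂.card ≤ t₀ ^ 2 + t₀ - 2 := by
  classical
  by_contra hmin
  push_neg at hmin
  rw [lt_min_iff] at hmin
  obtain ⟨hP₁, hP₂⟩ := hmin
  obtain ⟨s, hs⟩ : ∃ s, s = t₀ ^ 2 := ⟨_, rfl⟩
  rw [← hs] at hbig hB hP₁ hP₂
  set H : SimpleGraph V := gflip G ↑P₁ ↑P₂ with hHdef
  have hind' : ∀ u ∈ B, ∀ v ∈ B, u ≠ v → ∀ p : H.Walk u v, 2 * r' < p.length := by
    intro u hu v hv hne p
    exact hind u (Finset.mem_coe.mpr hu) v (Finset.mem_coe.mpr hv) hne p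
  -- adjacency facts for H
  have hadj12 : ∀ x y : V, x ∈ P₁ → y ∈ P₂ → x ≠ y → ¬ G.Adj x y → H.Adj x y := by
    intro x y h1 h2 hne hG
    exact ⟨hne, Or.inr ⟨Or.inl ⟨Finset.mem_coe.mpr h1, Finset.mem_coe.mpr h2⟩, hG⟩⟩
  have hadj21 : ∀ x y : V, x ∈ P₂ → y ∈ P₁ → x ≠ y → ¬ G.Adj x y → H.Adj x y := by
    intro x y h1 h2 hne hG
    exact ⟨hne, Or.inr ⟨Or.inr ⟨Finset.mem_coe.mpr h1, Finset.mem_coe.mpr h2⟩, hG⟩⟩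
  have hpres : ∀ x y : V, G.Adj x y →
      ¬ ((x ∈ P₁ ∧ y ∈ P₂) ∨ (x ∈ P₂ ∧ y ∈ P₁)) → H.Adj x y := by
    intro x y hG hc
    refine ⟨hG.ne, Or.inl ⟨hG, ?_⟩⟩
    simpa using hc
  -- nearness predicates
  set Near₁ : V → Prop := fun b => ∃ z ∈ P₁, ∃ q : H.Walk b z, q.length + 1 ≤ r' with hN₁def
  set Near₂ : V → Prop := fun b => ∃ z ∈ P₂, ∃ q : H.Walk b z, q.length + 1 ≤ r' with hN₂def
  -- one of any two distinct members of B is near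
  have hnear_pair : ∀ u ∈ B, ∀ v ∈ B, u ≠ v →
      (Near₁ u ∨ Near₂ u) ∨ (Near₁ v ∨ Near₂ v) := by
    intro u hu v hv hne
    obtain ⟨p, hp⟩ := hclose u hu v hv hne
    rcases walk_split P₁ P₂ hpres p with ⟨q, hq⟩ | ⟨x, y, hx, hy, q, w, hlen⟩
    · exact absurd (hind' u hu v hv hne q) (by omega)
    · -- get a short H-walk from v to some vertex of P₁ ∪ P₂
      have hsuffix : ∃ z : V, (z ∈ P₁ ∨ z ∈ P₂) ∧
          ∃ q₂ : H.Walk v z, q₂.length ≤ w.length := by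
        rcases walk_split P₁ P₂ hpres w.reverse with ⟨q₂, hq₂⟩ | ⟨x', y', hx', hy', q₂, w₂, hlen₂⟩
        · exact ⟨y, hy, q₂, by rw [hq₂, SimpleGraph.Walk.length_reverse]⟩
        · refine ⟨x', hx', q₂, ?_⟩
          rw [SimpleGraph.Walk.length_reverse] at hlen₂
          omega
      obtain ⟨z, hz, q₂, hq₂⟩ := hsuffix
      by_cases hcase : q.length + 1 ≤ r'
      · left
        rcases hx with hx | hx
        · exact Or.inl ⟨x, hx, q, hcase⟩
        · exact Or.inr ⟨x, hx, q, hcase⟩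
      · right
        have hq₂' : q₂.length + 1 ≤ r' := by omega
        rcases hz with hz | hz
        · exact Or.inl ⟨z, hz, q₂, hq₂'⟩
        · exact Or.inr ⟨z, hz, q₂, hq₂'⟩
  set B₁ : Finset V := B.filter Near₁ with hB₁def
  set B₂ : Finset V := B.filter Near₂ with hB₂def
  set N : Finset V := B.filter (fun b => ¬ (Near₁ b ∨ Near₂ b)) with hNdef
  have hNcard : N.card ≤ 1 := by
    rw [Finset.card_le_one]
    intro a ha b hb
    by_contra hab
    rw [hNdef, Finset.mem_filter] at ha hb
    rcases hnear_pair a ha.1 b hb.1 hab with h | h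
    · exact ha.2 h
    · exact hb.2 h
  have hcoverB : B ⊆ B₁ ∪ B₂ ∪ N := by
    intro b hb
    rw [Finset.mem_union, Finset.mem_union, hB₁def, hB₂def, hNdef,
      Finset.mem_filter, Finset.mem_filter, Finset.mem_filter]
    by_cases h1 : Near₁ b
    · exact Or.inl (Or.inl ⟨hb, h1⟩)
    · by_cases h2 : Near₂ b
      · exact Or.inl (Or.inr ⟨hb, h2⟩)
      · exact Or.inr ⟨hb, fun h => h.elim h1 h2⟩
  have hsum : B.card ≤ B₁.card + B₂.card + N.card := by
    calc B.card ≤ (B₁ ∪ B₂ ∪ N).card := Finset.card_le_card hcoverB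
    _ ≤ (B₁ ∪ B₂).card + N.card := Finset.card_union_le _ _
    _ ≤ B₁.card + B₂.card + N.card := by
        have := Finset.card_union_le B₁ B₂
        omega
  -- one of B₁, B₂ has at least 2t₀ elements
  have hbig' : 2 * t₀ ≤ B₁.card ∨ 2 * t₀ ≤ B₂.card := by omega
  have hK12 : ∀ X Y : Finset V, X ⊆ P₁ → Y ⊆ P₂ → Disjoint X Y →
      X.card = t₀ → Y.card = t₀ → (∀ x ∈ X, ∀ y ∈ Y, G.Adj x y) → False := by
    intro X Y h1 h2 h3 h4 h5 h6
    exact hKtt ⟨X, Y, h1, h2, h3, h4, h5, h6⟩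
  have hK21 : ∀ X Y : Finset V, X ⊆ P₂ → Y ⊆ P₁ → Disjoint X Y →
      X.card = t₀ → Y.card = t₀ → (∀ x ∈ X, ∀ y ∈ Y, G.Adj x y) → False := by
    intro X Y h1 h2 h3 h4 h5 h6
    exact hKtt ⟨Y, X, h2, h1, h3.symm, h5, h4, fun y hy x hx => (h6 x hx y hy).symm⟩
  rcases hbig' with h | h
  · exact core t₀ r' P₁ P₂ B B₁ (Finset.filter_subset _ _) hadj12 hind' hK12
      (by omega) h (fun b hb => (Finset.mem_filter.mp hb).2)
  · exact core t₀ r' P₂ P₁ B B₂ (Finset.filter_subset _ _) hadj21 hind' hK21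
      (by omega) h (fun b hb => (Finset.mem_filter.mp hb).2)
end

section
/- Let G be a graph, t₀, r, m positive integers, and B ⊆ V(G) with |B| ≥ t₀²+t₀+m−2 such that all vertices of B are pairwise at distance at most r in G. Suppose there is a flip F = (P₁,P₂) such that G contains no K_{t₀,t₀} subgraph with one side in P₁ and the other in P₂, and B is r-independent in G ⊕ F. Then there exist S ⊆ V(G) with |S| ≤ t₀²+t₀−2 and B' ⊆ B with |B'| ≥ m such that B' is r-independent in G \ S. -/
/-- `B` is `r`-independent in `G \ S`: every walk in `G` between two distinct vertices of
`B` whose support avoids `S` has length strictly greater than `r`. -/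
def RIndepAvoid {V : Type*} (G : SimpleGraph V) (r : ℕ) (S B : Set V) : Prop :=
  ∀ u ∈ B, ∀ v ∈ B, u ≠ v → ∀ p : G.Walk u v,
    (∀ w ∈ p.support, w ∉ S) → r < p.length

namespace SFAux

attribute [local instance] Classical.propDecidable

variable {V : Type*}

/-- The "crossing" relation of the flip. -/
def Crs (P₁ P₂ : Finset V) (x y : V) : Prop := (x ∈ P₁ ∧ y ∈ P₂) ∨ (x ∈ P₂ ∧ y ∈ P₁)

/-- `b` is within distance `n` of `P` in `H`. -/
def NearW (H : SimpleGraph V) (P : Finset V) (b : V) (n : ℕ) : Prop :=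
  ∃ z ∈ P, ∃ q : H.Walk b z, q.length ≤ n

/-- `b` is within distance `c - 1` of `P` in `H` (and `c ≥ 1`). -/
def SNear (H : SimpleGraph V) (P : Finset V) (c : ℕ) (b : V) : Prop :=
  ∃ z ∈ P, ∃ q : H.Walk b z, q.length + 1 ≤ c

lemma snear_to_near {H : SimpleGraph V} {P : Finset V} {c : ℕ} {b : V} (h : SNear H P c b) :
    NearW H P b (c - 1) := by
  obtain ⟨z, hz, q, hq⟩ := h
  exact ⟨z, hz, q, by omega⟩

lemma gflip_comm (G : SimpleGraph V) (P₁ P₂ : Finset V) :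
    gflip G (↑P₂) (↑P₁) = gflip G (↑P₁) (↑P₂) := by
  ext x y
  show _ ∧ _ ↔ _ ∧ _
  unfold Xor' Xor
  tauto

lemma gflip_adj_of_flip (G : SimpleGraph V) {P₁ P₂ : Finset V} {x y : V}
    (hne : x ≠ y) (hG : ¬ G.Adj x y) (hc : Crs P₁ P₂ x y) :
    (gflip G (↑P₁) (↑P₂)).Adj x y := by
  refine ⟨hne, Or.inr ⟨?_, hG⟩⟩
  rcases hc with ⟨h1, h2⟩ | ⟨h1, h2⟩
  · exact Or.inl ⟨by simpa using h1, by simpa using h2⟩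
  · exact Or.inr ⟨by simpa using h1, by simpa using h2⟩

lemma gflip_adj_of_unflipped (G : SimpleGraph V) {P₁ P₂ : Finset V} {x y : V}
    (hG : G.Adj x y) (hc : ¬ Crs P₁ P₂ x y) :
    (gflip G (↑P₁) (↑P₂)).Adj x y := by
  refine ⟨hG.ne, Or.inl ⟨hG, ?_⟩⟩
  intro hcon
  apply hc
  rcases hcon with ⟨h1, h2⟩ | ⟨h1, h2⟩
  · exact Or.inl ⟨by simpa using h1, by simpa using h2⟩
  · exact Or.inr ⟨by simpa using h1, by simpa using h2⟩

/-- A `G`-walk with no crossing dart transfers to the flip with the same length. -/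
lemma transfer (G : SimpleGraph V) (P₁ P₂ : Finset V) :
    ∀ {u v : V} (p : G.Walk u v),
      (∀ d ∈ p.darts, ¬ Crs P₁ P₂ d.toProd.1 d.toProd.2) →
      ∃ q : (gflip G (↑P₁) (↑P₂)).Walk u v, q.length = p.length := by
  intro u v p
  induction p with
  | nil => exact fun _ => ⟨SimpleGraph.Walk.nil, rfl⟩
  | @cons a b c h' p ih =>
    intro hd
    obtain ⟨q, hq⟩ := ih (fun d hdm => hd d (by simp [SimpleGraph.Walk.darts_cons, hdm]))
    have hhead : ¬ Crs P₁ P₂ a b := hd ⟨(a, b), h'⟩ (by simp [SimpleGraph.Walk.darts_cons])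
    exact ⟨SimpleGraph.Walk.cons (gflip_adj_of_unflipped G h' hhead) q,
      by simp [SimpleGraph.Walk.length_cons, hq]⟩

/-- Split a walk at its first crossing dart. -/
lemma split (G : SimpleGraph V) (P₁ P₂ : Finset V) :
    ∀ {u v : V} (p : G.Walk u v),
      (∃ d ∈ p.darts, Crs P₁ P₂ d.toProd.1 d.toProd.2) →
      ∃ (x x' : V) (q₁ : G.Walk u x) (q₂ : G.Walk x' v),
        G.Adj x x' ∧ Crs P₁ P₂ x x' ∧
        (∀ d ∈ q₁.darts, ¬ Crs P₁ P₂ d.toProd.1 d.toProd.2) ∧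
        q₁.length + 1 + q₂.length = p.length := by
  intro u v p
  induction p with
  | nil => rintro ⟨d, hd, _⟩; simp at hd
  | @cons a b c h' p ih =>
    intro hd
    by_cases hc : Crs P₁ P₂ a b
    · exact ⟨a, b, SimpleGraph.Walk.nil, p, h', hc, by simp,
        by simp only [SimpleGraph.Walk.length_nil, SimpleGraph.Walk.length_cons]; omega⟩
    · have hrest : ∃ d ∈ p.darts, Crs P₁ P₂ d.toProd.1 d.toProd.2 := by
        obtain ⟨d, hdm, hdc⟩ := hd
        rw [SimpleGraph.Walk.darts_cons, List.mem_cons] at hdm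
        rcases hdm with rfl | hdm
        · exact absurd hdc hc
        · exact ⟨d, hdm, hdc⟩
      obtain ⟨x, x', q₁, q₂, ha, hcx, hq₁, hl⟩ := ih hrest
      refine ⟨x, x', SimpleGraph.Walk.cons h' q₁, q₂, ha, hcx, ?_, ?_⟩
      · intro d hdm
        rw [SimpleGraph.Walk.darts_cons, List.mem_cons] at hdm
        rcases hdm with rfl | hdm
        · exact hc
        · exact hq₁ d hdm
      · simp only [SimpleGraph.Walk.length_cons]
        omega

/-- Core decomposition of a short crossing walk. -/
lemma walkCore (G : SimpleGraph V) (P₁ P₂ : Finset V) {u v : V} (p : G.Walk u v)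
    (hfl : ∃ d ∈ p.darts, Crs P₁ P₂ d.toProd.1 d.toProd.2) :
    ∃ (x y : V) (a₀ c₀ : ℕ),
      (∃ q : (gflip G (↑P₁) (↑P₂)).Walk u x, q.length ≤ a₀) ∧
      (∃ q : (gflip G (↑P₁) (↑P₂)).Walk v y, q.length ≤ c₀) ∧
      ((Crs P₁ P₂ x y ∧ a₀ + c₀ + 1 ≤ p.length) ∨
        ((x ∈ P₁ ∨ x ∈ P₂) ∧ (y ∈ P₁ ∨ y ∈ P₂) ∧ a₀ + c₀ + 2 ≤ p.length)) := by
  obtain ⟨x, x', q₁, q₂, ha, hcx, hq₁, hl⟩ := split G P₁ P₂ p hfl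
  obtain ⟨q₁', hq₁'⟩ := transfer G P₁ P₂ q₁ hq₁
  by_cases h2 : ∃ d ∈ q₂.reverse.darts, Crs P₁ P₂ d.toProd.1 d.toProd.2
  · obtain ⟨y, y', r₁, r₂, ha2, hcy, hr₁, hl2⟩ := split G P₁ P₂ q₂.reverse h2
    obtain ⟨r₁', hr₁'⟩ := transfer G P₁ P₂ r₁ hr₁
    refine ⟨x, y, q₁.length, r₁.length, ⟨q₁', le_of_eq hq₁'⟩, ⟨r₁', le_of_eq hr₁'⟩,
      Or.inr ⟨?_, ?_, ?_⟩⟩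
    · rcases hcx with ⟨h1, _⟩ | ⟨h1, _⟩
      · exact Or.inl h1
      · exact Or.inr h1
    · rcases hcy with ⟨h1, _⟩ | ⟨h1, _⟩
      · exact Or.inl h1
      · exact Or.inr h1
    · rw [SimpleGraph.Walk.length_reverse] at hl2
      omega
  · push_neg at h2
    obtain ⟨q₂', hq₂'⟩ := transfer G P₁ P₂ q₂.reverse h2
    rw [SimpleGraph.Walk.length_reverse] at hq₂'
    exact ⟨x, x', q₁.length, q₂.length, ⟨q₁', le_of_eq hq₁'⟩, ⟨q₂', le_of_eq hq₂'⟩,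
      Or.inl ⟨hcx, by omega⟩⟩

section Core

variable (G : SimpleGraph V) (P₁ P₂ B : Finset V) (t₀ r : ℕ)

lemma ind_contra (hind : RIndep (gflip G (↑P₁) (↑P₂)) r ↑B) {b b' : V}
    (hb : b ∈ B) (hb' : b' ∈ B) (hne : b ≠ b')
    (q : (gflip G (↑P₁) (↑P₂)).Walk b b') (hq : q.length ≤ r) : False := by
  have := hind b (by simpa using hb) b' (by simpa using hb') hne q
  omega

lemma meet_contra (hind : RIndep (gflip G (↑P₁) (↑P₂)) r ↑B) {b b' z : V}
    (hb : b ∈ B) (hb' : b' ∈ B) (hne : b ≠ b')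
    (q : (gflip G (↑P₁) (↑P₂)).Walk b z) (q' : (gflip G (↑P₁) (↑P₂)).Walk b' z)
    (h : q.length + q'.length ≤ r) : False := by
  apply ind_contra G P₁ P₂ B r hind hb hb' hne (q.append q'.reverse)
  rw [SimpleGraph.Walk.length_append, SimpleGraph.Walk.length_reverse]
  omega

lemma pairGet (hind : RIndep (gflip G (↑P₁) (↑P₂)) r ↑B)
    (hclose : ∀ u ∈ B, ∀ v ∈ B, u ≠ v → ∃ p : G.Walk u v, p.length ≤ r)
    {u v : V} (hu : u ∈ B) (hv : v ∈ B) (hne : u ≠ v) :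
    ∃ (x y : V) (a₀ c₀ : ℕ),
      (∃ q : (gflip G (↑P₁) (↑P₂)).Walk u x, q.length ≤ a₀) ∧
      (∃ q : (gflip G (↑P₁) (↑P₂)).Walk v y, q.length ≤ c₀) ∧
      ((Crs P₁ P₂ x y ∧ a₀ + c₀ + 1 ≤ r) ∨
        ((x ∈ P₁ ∨ x ∈ P₂) ∧ (y ∈ P₁ ∨ y ∈ P₂) ∧ a₀ + c₀ + 2 ≤ r)) := by
  obtain ⟨p, hp⟩ := hclose u hu v hv hne
  by_cases hfl : ∃ d ∈ p.darts, Crs P₁ P₂ d.toProd.1 d.toProd.2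
  · obtain ⟨x, y, a₀, c₀, h1, h2, h3⟩ := walkCore G P₁ P₂ p hfl
    refine ⟨x, y, a₀, c₀, h1, h2, ?_⟩
    rcases h3 with ⟨hc, hl⟩ | ⟨hx, hy, hl⟩
    · exact Or.inl ⟨hc, by omega⟩
    · exact Or.inr ⟨hx, hy, by omega⟩
  · push_neg at hfl
    obtain ⟨q, hq⟩ := transfer G P₁ P₂ p hfl
    exact (ind_contra G P₁ P₂ B r hind hu hv hne q (by omega)).elim

lemma pairS1 (hind : RIndep (gflip G (↑P₁) (↑P₂)) r ↑B)
    (hclose : ∀ u ∈ B, ∀ v ∈ B, u ≠ v → ∃ p : G.Walk u v, p.length ≤ r)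
    (c : ℕ) (hc1 : 2 * c ≤ r) (hc2 : r ≤ 2 * c + 1)
    {u v : V} (hu : u ∈ B) (hv : v ∈ B) (hne : u ≠ v)
    (hu2 : ¬ NearW (gflip G (↑P₁) (↑P₂)) P₂ u c)
    (hv2 : ¬ NearW (gflip G (↑P₁) (↑P₂)) P₂ v c) :
    SNear (gflip G (↑P₁) (↑P₂)) P₁ c u ∨ SNear (gflip G (↑P₁) (↑P₂)) P₁ c v := by
  obtain ⟨x, y, a₀, c₀, ⟨qu, hqu⟩, ⟨qv, hqv⟩, hcase⟩ :=
    pairGet G P₁ P₂ B r hind hclose hu hv hne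
  have hux2 : x ∈ P₂ → ¬ (a₀ ≤ c) := fun hx hle => hu2 ⟨x, hx, qu, by omega⟩
  have hvy2 : y ∈ P₂ → ¬ (c₀ ≤ c) := fun hy hle => hv2 ⟨y, hy, qv, by omega⟩
  have hSx : x ∈ P₁ → a₀ + 1 ≤ c → SNear (gflip G (↑P₁) (↑P₂)) P₁ c u :=
    fun hx h => ⟨x, hx, qu, by omega⟩
  have hSy : y ∈ P₁ → c₀ + 1 ≤ c → SNear (gflip G (↑P₁) (↑P₂)) P₁ c v :=
    fun hy h => ⟨y, hy, qv, by omega⟩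
  rcases hcase with ⟨hcrs, hl⟩ | ⟨hx, hy, hl⟩
  · rcases hcrs with ⟨hx1, hy2⟩ | ⟨hx2, hy1⟩
    · refine Or.inl (hSx hx1 ?_)
      have := hvy2 hy2
      omega
    · refine Or.inr (hSy hy1 ?_)
      have := hux2 hx2
      omega
  · rcases hx with hx1 | hx2
    · by_cases ha : a₀ + 1 ≤ c
      · exact Or.inl (hSx hx1 ha)
      · rcases hy with hy1 | hy2
        · exact Or.inr (hSy hy1 (by omega))
        · exact absurd (by omega : c₀ ≤ c) (hvy2 hy2)
    · have hx2' := hux2 hx2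
      rcases hy with hy1 | hy2
      · exact Or.inr (hSy hy1 (by omega))
      · exact absurd (by omega : c₀ ≤ c) (hvy2 hy2)

lemma pairS2 (hind : RIndep (gflip G (↑P₁) (↑P₂)) r ↑B)
    (hclose : ∀ u ∈ B, ∀ v ∈ B, u ≠ v → ∃ p : G.Walk u v, p.length ≤ r)
    (c : ℕ) (he : r = 2 * c)
    {u v : V} (hu : u ∈ B) (hv : v ∈ B) (hne : u ≠ v)
    (hu1 : ¬ SNear (gflip G (↑P₁) (↑P₂)) P₁ c u)
    (hv1 : ¬ SNear (gflip G (↑P₁) (↑P₂)) P₁ c v) :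
    SNear (gflip G (↑P₁) (↑P₂)) P₂ c u ∨ SNear (gflip G (↑P₁) (↑P₂)) P₂ c v := by
  obtain ⟨x, y, a₀, c₀, ⟨qu, hqu⟩, ⟨qv, hqv⟩, hcase⟩ :=
    pairGet G P₁ P₂ B r hind hclose hu hv hne
  have hux1 : x ∈ P₁ → ¬ (a₀ + 1 ≤ c) := fun hx h => hu1 ⟨x, hx, qu, by omega⟩
  have hvy1 : y ∈ P₁ → ¬ (c₀ + 1 ≤ c) := fun hy h => hv1 ⟨y, hy, qv, by omega⟩
  have hSx : x ∈ P₂ → a₀ + 1 ≤ c → SNear (gflip G (↑P₁) (↑P₂)) P₂ c u :=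
    fun hx h => ⟨x, hx, qu, by omega⟩
  have hSy : y ∈ P₂ → c₀ + 1 ≤ c → SNear (gflip G (↑P₁) (↑P₂)) P₂ c v :=
    fun hy h => ⟨y, hy, qv, by omega⟩
  rcases hcase with ⟨hcrs, hl⟩ | ⟨hx, hy, hl⟩
  · rcases hcrs with ⟨hx1, hy2⟩ | ⟨hx2, hy1⟩
    · have := hux1 hx1
      exact Or.inr (hSy hy2 (by omega))
    · have := hvy1 hy1
      exact Or.inl (hSx hx2 (by omega))
  · rcases hx with hx1 | hx2
    · have h1 := hux1 hx1
      rcases hy with hy1 | hy2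
      · have := hvy1 hy1
        exfalso; omega
      · exact Or.inr (hSy hy2 (by omega))
    · by_cases ha : a₀ + 1 ≤ c
      · exact Or.inl (hSx hx2 ha)
      · rcases hy with hy1 | hy2
        · have := hvy1 hy1
          exfalso; omega
        · exact Or.inr (hSy hy2 (by omega))

lemma ustep (c : ℕ) {u z : V}
    (hu2 : ¬ NearW (gflip G (↑P₁) (↑P₂)) P₂ u c) (hz : z ∈ P₁)
    (q : (gflip G (↑P₁) (↑P₂)).Walk u z) (hq : q.length + 1 ≤ c) :
    ∀ w ∈ P₂, w = z ∨ G.Adj z w := by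
  intro w hw
  by_cases hwz : w = z
  · exact Or.inl hwz
  right
  by_contra hadj
  have hA : (gflip G (↑P₁) (↑P₂)).Adj z w :=
    gflip_adj_of_flip G (fun h => hwz h.symm) hadj (Or.inl ⟨hz, hw⟩)
  exact hu2 ⟨w, hw, q.concat hA, by rw [SimpleGraph.Walk.length_concat]; omega⟩

lemma univ_bound
    (hKtt : ¬ ∃ X Y : Finset V, X ⊆ P₁ ∧ Y ⊆ P₂ ∧ Disjoint X Y ∧
      X.card = t₀ ∧ Y.card = t₀ ∧ ∀ x ∈ X, ∀ y ∈ Y, G.Adj x y)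
    (hP2 : 2 * t₀ ≤ P₂.card) :
    (P₁.filter (fun z => ∀ w ∈ P₂, w = z ∨ G.Adj z w)).card < t₀ := by
  by_contra hcon
  push_neg at hcon
  obtain ⟨X, hXsub, hXcard⟩ := Finset.exists_subset_card_eq hcon
  have hY : t₀ ≤ (P₂ \ X).card := by
    have h1 := Finset.card_le_card_sdiff_add_card (s := P₂) (t := X)
    omega
  obtain ⟨Y, hYsub, hYcard⟩ := Finset.exists_subset_card_eq hY
  apply hKtt
  refine ⟨X, Y, hXsub.trans (Finset.filter_subset _ _), hYsub.trans Finset.sdiff_subset,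
    ?_, hXcard, hYcard, ?_⟩
  · rw [Finset.disjoint_left]
    intro a haX haY
    exact (Finset.mem_sdiff.mp (hYsub haY)).2 haX
  · intro x hx y hy
    have hxf := Finset.mem_filter.mp (hXsub hx)
    rcases hxf.2 y (Finset.sdiff_subset (hYsub hy)) with h | h
    · subst h
      exact absurd hx (Finset.mem_sdiff.mp (hYsub hy)).2
    · exact h

end Core

/-- Choice of a nearby vertex of `P`. -/
noncomputable def pick (H : SimpleGraph V) (P : Finset V) (n : ℕ) (b : V) : V :=
  if h : NearW H P b n then h.choose else b

lemma pick_spec {H : SimpleGraph V} {P : Finset V} {n : ℕ} {b : V} (h : NearW H P b n) :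
    pick H P n b ∈ P ∧ ∃ q : H.Walk b (pick H P n b), q.length ≤ n := by
  unfold pick
  rw [dif_pos h]
  exact h.choose_spec

section Count

variable (G : SimpleGraph V) (P₁ P₂ B : Finset V) (t₀ r : ℕ)

lemma countZ (ht₀ : 0 < t₀)
    (hKtt : ¬ ∃ X Y : Finset V, X ⊆ P₁ ∧ Y ⊆ P₂ ∧ Disjoint X Y ∧
      X.card = t₀ ∧ Y.card = t₀ ∧ ∀ x ∈ X, ∀ y ∈ Y, G.Adj x y)
    (hP2 : 2 * t₀ ≤ P₂.card)
    (hind : RIndep (gflip G (↑P₁) (↑P₂)) r ↑B)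
    (hclose : ∀ u ∈ B, ∀ v ∈ B, u ≠ v → ∃ p : G.Walk u v, p.length ≤ r)
    (c : ℕ) (hc1 : 2 * c ≤ r) (hc2 : r ≤ 2 * c + 1) :
    (B.filter fun b => ¬ NearW (gflip G (↑P₁) (↑P₂)) P₂ b c).card ≤ t₀ := by
  set H := gflip G (↑P₁ : Set V) (↑P₂ : Set V) with hH
  set Z := B.filter fun b => ¬ NearW H P₂ b c with hZdef
  set Zw := Z.filter (SNear H P₁ c) with hZwdef
  have hZB : Z ⊆ B := Finset.filter_subset _ _
  have h1 : (Z \ Zw).card ≤ 1 := by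
    rw [Finset.card_le_one]
    intro a ha b hb
    by_contra hne
    have haZ := Finset.mem_sdiff.mp ha
    have hbZ := Finset.mem_sdiff.mp hb
    have ha2 := (Finset.mem_filter.mp haZ.1).2
    have hb2 := (Finset.mem_filter.mp hbZ.1).2
    rcases pairS1 G P₁ P₂ B r hind hclose c hc1 hc2 (hZB haZ.1) (hZB hbZ.1) hne ha2 hb2 with
      h | h
    · exact haZ.2 (Finset.mem_filter.mpr ⟨haZ.1, h⟩)
    · exact hbZ.2 (Finset.mem_filter.mpr ⟨hbZ.1, h⟩)
  have h2 : Zw.card ≤ (P₁.filter (fun z => ∀ w ∈ P₂, w = z ∨ G.Adj z w)).card := by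
    apply Finset.card_le_card_of_injOn (pick H P₁ (c - 1))
    · intro b hb
      have hbm := Finset.mem_filter.mp hb
      have hs : NearW H P₁ b (c - 1) := snear_to_near hbm.2
      obtain ⟨hzmem, q, hq⟩ := pick_spec hs
      have hc0 : 1 ≤ c := by
        obtain ⟨z, hz, q', hq'⟩ := hbm.2
        omega
      refine Finset.mem_filter.mpr ⟨hzmem, ?_⟩
      exact ustep G P₁ P₂ c (Finset.mem_filter.mp hbm.1).2 hzmem q (by omega)
    · intro b hb b' hb' heq
      simp only [Finset.mem_coe] at hb hb'
      by_contra hne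
      have hsb : NearW H P₁ b (c - 1) := snear_to_near (Finset.mem_filter.mp hb).2
      have hsb' : NearW H P₁ b' (c - 1) := snear_to_near (Finset.mem_filter.mp hb').2
      obtain ⟨_, q, hq⟩ := pick_spec hsb
      obtain ⟨_, q', hq'⟩ := pick_spec hsb'
      have hc0 : 1 ≤ c := by
        obtain ⟨z, hz, q'', hq''⟩ := (Finset.mem_filter.mp hb).2
        omega
      exact meet_contra G P₁ P₂ B r hind (hZB (Finset.filter_subset _ _ hb))
        (hZB (Finset.filter_subset _ _ hb')) hne q (q'.copy rfl heq.symm)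
        (by rw [SimpleGraph.Walk.length_copy]; omega)
  have h3 := univ_bound G P₁ P₂ t₀ hKtt hP2
  have h4 := Finset.card_le_card_sdiff_add_card (s := Z) (t := Zw)
  omega

lemma ktt (hKtt : ¬ ∃ X Y : Finset V, X ⊆ P₁ ∧ Y ⊆ P₂ ∧ Disjoint X Y ∧
      X.card = t₀ ∧ Y.card = t₀ ∧ ∀ x ∈ X, ∀ y ∈ Y, G.Adj x y)
    (hind : RIndep (gflip G (↑P₁) (↑P₂)) r ↑B)
    (α γ : ℕ) (hsum : α + γ + 1 ≤ r) (h2α : 2 * α ≤ r) (h2γ : 2 * γ ≤ r)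
    (A₁ A₂ : Finset V) (hA₁ : A₁ ⊆ B) (hA₂ : A₂ ⊆ B) (hdisj : Disjoint A₁ A₂)
    (hc₁ : A₁.card = t₀) (hc₂ : A₂.card = t₀)
    (hw₁ : ∀ b ∈ A₁, NearW (gflip G (↑P₁) (↑P₂)) P₁ b α)
    (hw₂ : ∀ b ∈ A₂, NearW (gflip G (↑P₁) (↑P₂)) P₂ b γ) : False := by
  set H := gflip G (↑P₁ : Set V) (↑P₂ : Set V) with hH
  have hbne : ∀ b ∈ A₁, ∀ b' ∈ A₂, b ≠ b' := by
    intro b hb b' hb' h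
    exact Finset.disjoint_left.mp hdisj hb (h ▸ hb')
  have hinj₁ : Set.InjOn (pick H P₁ α) ↑A₁ := by
    intro b hb b' hb' heq
    simp only [Finset.mem_coe] at hb hb'
    by_contra hne
    obtain ⟨_, q, hq⟩ := pick_spec (hw₁ b hb)
    obtain ⟨_, q', hq'⟩ := pick_spec (hw₁ b' hb')
    exact meet_contra G P₁ P₂ B r hind (hA₁ hb) (hA₁ hb') hne q (q'.copy rfl heq.symm)
      (by rw [SimpleGraph.Walk.length_copy]; omega)
  have hinj₂ : Set.InjOn (pick H P₂ γ) ↑A₂ := by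
    intro b hb b' hb' heq
    simp only [Finset.mem_coe] at hb hb'
    by_contra hne
    obtain ⟨_, q, hq⟩ := pick_spec (hw₂ b hb)
    obtain ⟨_, q', hq'⟩ := pick_spec (hw₂ b' hb')
    exact meet_contra G P₁ P₂ B r hind (hA₂ hb) (hA₂ hb') hne q (q'.copy rfl heq.symm)
      (by rw [SimpleGraph.Walk.length_copy]; omega)
  apply hKtt
  refine ⟨A₁.image (pick H P₁ α), A₂.image (pick H P₂ γ), ?_, ?_, ?_, ?_, ?_, ?_⟩
  · intro z hz
    obtain ⟨b, hb, rfl⟩ := Finset.mem_image.mp hz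
    exact (pick_spec (hw₁ b hb)).1
  · intro z hz
    obtain ⟨b, hb, rfl⟩ := Finset.mem_image.mp hz
    exact (pick_spec (hw₂ b hb)).1
  · rw [Finset.disjoint_left]
    intro z hz1 hz2
    obtain ⟨b, hb, rfl⟩ := Finset.mem_image.mp hz1
    obtain ⟨b', hb', heq⟩ := Finset.mem_image.mp hz2
    obtain ⟨_, q, hq⟩ := pick_spec (hw₁ b hb)
    obtain ⟨_, q', hq'⟩ := pick_spec (hw₂ b' hb')
    exact meet_contra G P₁ P₂ B r hind (hA₁ hb) (hA₂ hb') (hbne b hb b' hb')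
      q (q'.copy rfl heq) (by rw [SimpleGraph.Walk.length_copy]; omega)
  · rw [Finset.card_image_of_injOn hinj₁]; exact hc₁
  · rw [Finset.card_image_of_injOn hinj₂]; exact hc₂
  · intro x hx y hy
    obtain ⟨b, hb, rfl⟩ := Finset.mem_image.mp hx
    obtain ⟨b', hb', rfl⟩ := Finset.mem_image.mp hy
    obtain ⟨hz1, q, hq⟩ := pick_spec (hw₁ b hb)
    obtain ⟨hz2, q', hq'⟩ := pick_spec (hw₂ b' hb')
    by_contra hadj
    by_cases heq : pick H P₁ α b = pick H P₂ γ b'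
    · exact meet_contra G P₁ P₂ B r hind (hA₁ hb) (hA₂ hb') (hbne b hb b' hb')
        q (q'.copy rfl heq.symm) (by rw [SimpleGraph.Walk.length_copy]; omega)
    · have hA : H.Adj (pick H P₁ α b) (pick H P₂ γ b') :=
        gflip_adj_of_flip G heq hadj (Or.inl ⟨hz1, hz2⟩)
      apply ind_contra G P₁ P₂ B r hind (hA₁ hb) (hA₂ hb') (hbne b hb b' hb')
        (q.append (SimpleGraph.Walk.cons hA q'.reverse))
      rw [SimpleGraph.Walk.length_append, SimpleGraph.Walk.length_cons,
        SimpleGraph.Walk.length_reverse]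
      omega

end Count

lemma mainFalse (G : SimpleGraph V) (P₁ P₂ B : Finset V) (t₀ r : ℕ)
    (ht₀ : 0 < t₀) (hr : 0 < r)
    (hKtt : ¬ ∃ X Y : Finset V, X ⊆ P₁ ∧ Y ⊆ P₂ ∧ Disjoint X Y ∧
      X.card = t₀ ∧ Y.card = t₀ ∧ ∀ x ∈ X, ∀ y ∈ Y, G.Adj x y)
    (hP1 : 2 * t₀ ≤ P₁.card) (hP2 : 2 * t₀ ≤ P₂.card)
    (hB : 4 * t₀ + 2 ≤ B.card)
    (hclose : ∀ u ∈ B, ∀ v ∈ B, u ≠ v → ∃ p : G.Walk u v, p.length ≤ r)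
    (hind : RIndep (gflip G (↑P₁) (↑P₂)) r ↑B) : False := by
  set H := gflip G (↑P₁ : Set V) (↑P₂ : Set V) with hH
  have hGE : gflip G (↑P₂ : Set V) (↑P₁ : Set V) = H := gflip_comm G P₁ P₂
  have hKtt' : ¬ ∃ X Y : Finset V, X ⊆ P₂ ∧ Y ⊆ P₁ ∧ Disjoint X Y ∧
      X.card = t₀ ∧ Y.card = t₀ ∧ ∀ x ∈ X, ∀ y ∈ Y, G.Adj x y := by
    rintro ⟨X, Y, hX, hY, hd, hcX, hcY, hadj⟩
    exact hKtt ⟨Y, X, hY, hX, hd.symm, hcY, hcX, fun y hy x hx => (hadj x hx y hy).symm⟩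
  have hind' : RIndep (gflip G (↑P₂) (↑P₁)) r ↑B := by rw [hGE]; exact hind
  set c := r / 2 with hcdef
  have hc1 : 2 * c ≤ r := by omega
  have hc2 : r ≤ 2 * c + 1 := by omega
  have hZ2 := countZ G P₁ P₂ B t₀ r ht₀ hKtt hP2 hind hclose c hc1 hc2
  have hZ1 := countZ G P₂ P₁ B t₀ r ht₀ hKtt' hP1 hind' hclose c hc1 hc2
  simp only [hGE] at hZ1
  set Z1 := B.filter (fun b => ¬ NearW H P₁ b c) with hZ1def
  set Z2 := B.filter (fun b => ¬ NearW H P₂ b c) with hZ2def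
  have hZ1B : Z1 ⊆ B := Finset.filter_subset _ _
  have hZ2B : Z2 ⊆ B := Finset.filter_subset _ _
  have hnear1 : ∀ b ∈ B, b ∉ Z1 → NearW H P₁ b c := by
    intro b hb hbz
    by_contra h
    exact hbz (Finset.mem_filter.mpr ⟨hb, h⟩)
  have hnear2 : ∀ b ∈ B, b ∉ Z2 → NearW H P₂ b c := by
    intro b hb hbz
    by_contra h
    exact hbz (Finset.mem_filter.mpr ⟨hb, h⟩)
  have hpar : r = 2 * c ∨ r = 2 * c + 1 := by omega
  rcases hpar with he | ho
  · -- even case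
    have hc0 : 1 ≤ c := by omega
    set W := B.filter (SNear H P₁ c) with hWdef
    by_cases hW : t₀ ≤ W.card
    · obtain ⟨A₁, hA₁sub, hA₁card⟩ := Finset.exists_subset_card_eq hW
      have hrest : t₀ ≤ (B \ (Z2 ∪ A₁)).card := by
        have h1 := Finset.card_le_card_sdiff_add_card (s := B) (t := Z2 ∪ A₁)
        have h2 := Finset.card_union_le Z2 A₁
        omega
      obtain ⟨A₂, hA₂sub, hA₂card⟩ := Finset.exists_subset_card_eq hrest
      refine ktt G P₁ P₂ B t₀ r hKtt hind (c - 1) c (by omega) (by omega) hc1 A₁ A₂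
        (hA₁sub.trans (Finset.filter_subset _ _)) (hA₂sub.trans Finset.sdiff_subset)
        ?_ hA₁card hA₂card ?_ ?_
      · rw [Finset.disjoint_left]
        intro a ha1 ha2
        exact (Finset.mem_union.not.mp (Finset.mem_sdiff.mp (hA₂sub ha2)).2)
          (Or.inr ha1)
      · intro b hb
        exact snear_to_near (Finset.mem_filter.mp (hA₁sub hb)).2
      · intro b hb
        have hbm := Finset.mem_sdiff.mp (hA₂sub hb)
        exact hnear2 b hbm.1 (fun h => hbm.2 (Finset.mem_union.mpr (Or.inl h)))
    · -- few b's have a strictly-near P₁ vertex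
      push_neg at hW
      set Bs := B \ (W ∪ Z2) with hBsdef
      set Ws := Bs.filter (SNear H P₂ c) with hWsdef
      have hBsB : Bs ⊆ B := Finset.sdiff_subset
      have hnots1 : ∀ b ∈ Bs, ¬ SNear H P₁ c b := by
        intro b hb hs
        have hbm := Finset.mem_sdiff.mp hb
        exact hbm.2 (Finset.mem_union.mpr (Or.inl (Finset.mem_filter.mpr ⟨hbm.1, hs⟩)))
      have h1 : (Bs \ Ws).card ≤ 1 := by
        rw [Finset.card_le_one]
        intro a ha b hb
        by_contra hne
        have haB := Finset.mem_sdiff.mp ha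
        have hbB := Finset.mem_sdiff.mp hb
        rcases pairS2 G P₁ P₂ B r hind hclose c he (hBsB haB.1) (hBsB hbB.1) hne
          (hnots1 a haB.1) (hnots1 b hbB.1) with h | h
        · exact haB.2 (Finset.mem_filter.mpr ⟨haB.1, h⟩)
        · exact hbB.2 (Finset.mem_filter.mpr ⟨hbB.1, h⟩)
      have hWscard : 2 * t₀ ≤ Ws.card := by
        have h2 := Finset.card_le_card_sdiff_add_card (s := Bs) (t := Ws)
        have h3 := Finset.card_le_card_sdiff_add_card (s := B) (t := W ∪ Z2)
        rw [← hBsdef] at h3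
        have h4 := Finset.card_union_le W Z2
        omega
      obtain ⟨A₂, hA₂sub, hA₂card⟩ := Finset.exists_subset_card_eq (s := Ws) (n := t₀) (by omega)
      have hrest : t₀ ≤ (B \ (Z1 ∪ A₂)).card := by
        have h2 := Finset.card_le_card_sdiff_add_card (s := B) (t := Z1 ∪ A₂)
        have h3 := Finset.card_union_le Z1 A₂
        omega
      obtain ⟨A₁, hA₁sub, hA₁card⟩ := Finset.exists_subset_card_eq hrest
      refine ktt G P₁ P₂ B t₀ r hKtt hind c (c - 1) (by omega) hc1 (by omega) A₁ A₂
        (hA₁sub.trans Finset.sdiff_subset)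
        ((hA₂sub.trans (Finset.filter_subset _ _)).trans hBsB)
        ?_ hA₁card hA₂card ?_ ?_
      · rw [Finset.disjoint_left]
        intro a ha1 ha2
        exact (Finset.mem_union.not.mp (Finset.mem_sdiff.mp (hA₁sub ha1)).2)
          (Or.inr ha2)
      · intro b hb
        have hbm := Finset.mem_sdiff.mp (hA₁sub hb)
        exact hnear1 b hbm.1 (fun h => hbm.2 (Finset.mem_union.mpr (Or.inl h)))
      · intro b hb
        exact snear_to_near (Finset.mem_filter.mp (hA₂sub hb)).2
  · -- odd case
    set Good := B \ (Z1 ∪ Z2) with hGooddef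
    have hGoodB : Good ⊆ B := Finset.sdiff_subset
    have hGoodcard : 2 * t₀ ≤ Good.card := by
      have h2 := Finset.card_le_card_sdiff_add_card (s := B) (t := Z1 ∪ Z2)
      rw [← hGooddef] at h2
      have h3 := Finset.card_union_le Z1 Z2
      omega
    obtain ⟨A₁, hA₁sub, hA₁card⟩ := Finset.exists_subset_card_eq (s := Good) (n := t₀) (by omega)
    have hrest : t₀ ≤ (Good \ A₁).card := by
      have h2 := Finset.card_le_card_sdiff_add_card (s := Good) (t := A₁)
      omega
    obtain ⟨A₂, hA₂sub, hA₂card⟩ := Finset.exists_subset_card_eq hrest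
    refine ktt G P₁ P₂ B t₀ r hKtt hind c c (by omega) hc1 hc1 A₁ A₂
      (hA₁sub.trans hGoodB) ((hA₂sub.trans Finset.sdiff_subset).trans hGoodB)
      ?_ hA₁card hA₂card ?_ ?_
    · rw [Finset.disjoint_left]
      intro a ha1 ha2
      exact (Finset.mem_sdiff.mp (hA₂sub ha2)).2 ha1
    · intro b hb
      have hbm := Finset.mem_sdiff.mp (hA₁sub hb)
      exact hnear1 b hbm.1 (fun h => hbm.2 (Finset.mem_union.mpr (Or.inl h)))
    · intro b hb
      have hbm := Finset.mem_sdiff.mp ((Finset.mem_sdiff.mp (hA₂sub hb)).1)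
      exact hnear2 b hbm.1 (fun h => hbm.2 (Finset.mem_union.mpr (Or.inr h)))

lemma small_case (G : SimpleGraph V) (P₁ P₂ B S : Finset V) (r : ℕ)
    (hind : RIndep (gflip G (↑P₁) (↑P₂)) r ↑B)
    (hS : ∀ x y : V, Crs P₁ P₂ x y → x ∈ S ∨ y ∈ S) :
    RIndepAvoid G r ↑S ↑(B \ S) := by
  intro u hu v hv hne p hsup
  by_contra hlen
  push_neg at hlen
  have hnc : ∀ d ∈ p.darts, ¬ Crs P₁ P₂ d.toProd.1 d.toProd.2 := by
    intro d hd hc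
    rcases hS _ _ hc with h | h
    · exact hsup d.toProd.1 (SimpleGraph.Walk.dart_fst_mem_support_of_mem_darts p hd)
        (by simpa using h)
    · exact hsup d.toProd.2 (SimpleGraph.Walk.dart_snd_mem_support_of_mem_darts p hd)
        (by simpa using h)
  obtain ⟨q, hq⟩ := transfer G P₁ P₂ p hnc
  have hu' : u ∈ B := (Finset.mem_sdiff.mp (by simpa using hu)).1
  have hv' : v ∈ B := (Finset.mem_sdiff.mp (by simpa using hv)).1
  exact ind_contra G P₁ P₂ B r hind hu' hv' hne q (by omega)

end SFAux

/-- Lemma 6 of the paper. -/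
theorem single_flip_to_deletion {V : Type*} (G : SimpleGraph V) (t₀ r m : ℕ)
    (ht₀ : 0 < t₀) (hr : 0 < r) (hm : 0 < m)
    (hbig : 8 * t₀ ≤ t₀ ^ 2 + t₀ - 2)
    (P₁ P₂ B : Finset V)
    (hKtt : ¬ ∃ X Y : Finset V, X ⊆ P₁ ∧ Y ⊆ P₂ ∧ Disjoint X Y ∧
      X.card = t₀ ∧ Y.card = t₀ ∧ ∀ x ∈ X, ∀ y ∈ Y, G.Adj x y)
    (hB : t₀ ^ 2 + t₀ + m - 2 ≤ B.card)
    (hclose : ∀ u ∈ B, ∀ v ∈ B, u ≠ v → ∃ p : G.Walk u v, p.length ≤ r)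
    (hind : RIndep (gflip G ↑P₁ ↑P₂) r ↑B) :
    ∃ S : Finset V, S.card ≤ t₀ ^ 2 + t₀ - 2 ∧
      ∃ B' ⊆ B, m ≤ B'.card ∧ Disjoint B' S ∧ RIndepAvoid G r ↑S ↑B' := by
  classical
  obtain ⟨K, hK⟩ : ∃ K, K = t₀ ^ 2 := ⟨_, rfl⟩
  rw [← hK] at hbig hB ⊢
  by_cases hP1 : P₁.card ≤ K + t₀ - 2
  · refine ⟨P₁, hP1, B \ P₁, Finset.sdiff_subset, ?_, Finset.sdiff_disjoint, ?_⟩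
    · have h1 := Finset.card_le_card_sdiff_add_card (s := B) (t := P₁)
      omega
    · exact SFAux.small_case G P₁ P₂ B P₁ r hind
        (fun x y hc => by rcases hc with ⟨h1, _⟩ | ⟨_, h2⟩; exacts [Or.inl h1, Or.inr h2])
  by_cases hP2 : P₂.card ≤ K + t₀ - 2
  · refine ⟨P₂, hP2, B \ P₂, Finset.sdiff_subset, ?_, Finset.sdiff_disjoint, ?_⟩
    · have h1 := Finset.card_le_card_sdiff_add_card (s := B) (t := P₂)
      omega
    · exact SFAux.small_case G P₁ P₂ B P₂ r hind
        (fun x y hc => by rcases hc with ⟨_, h2⟩ | ⟨h1, _⟩; exacts [Or.inr h2, Or.inl h1])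
  exact (SFAux.mainFalse G P₁ P₂ B t₀ r ht₀ hr hKtt
    (by omega) (by omega) (by omega) hclose hind).elim
end
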